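/- arXiv:2410.05420 — 2 statements merged into one kernel-verified Lean document; each statement's English description precedes it below -/
import Mathlib

section
/- For any finite graph G and any positive integer k, α(G) = k if and only if G has an extended independent set of order k but no extended independent set of any larger order. Equivalently, every finite graph G has an extended independent set, and the maximum order of an extended independent set of G equals α(G). -/
open Filter Asymptotics Real

/-- The independence number of a graph: the maximum size of a set of vertices
containing no edge. -/
noncomputable def indepNum {V : Type*} (G : SimpleGraph V) : ℕ :=
  sSup {k | ∃ s : Finset V, s.card = k ∧ ∀ u ∈ s, ∀ v ∈ s, ¬ G.Adj u v}

/-- `u` and `w` are connected by a walk of `G` all of whose vertices lie in `K`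
(i.e. they lie in the same connected component of the induced subgraph `G[K]`). -/
def ReachWithin {V : Type*} (G : SimpleGraph V) (K : Finset V) : V → V → Prop :=
  Relation.ReflTransGen (fun a b => a ∈ K ∧ b ∈ K ∧ G.Adj a b)

-- `K` is an extended independent set of order `k` in `G`: for some `0 ≤ r ≤ k`, `K` has
-- `k + r` vertices, the induced subgraph `G[K]` has no cycles, exactly `2r` non-isolated
-- vertices and a perfect matching `M` among those `2r` vertices, and every vertex outside
-- `K` has either at least two neighbors in `K` that are isolated in `G[K]`, or at least two
-- neighbors in `K` lying in the same connected component of `G[K]`.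
open scoped Classical in
def IsExtIndepSet {V : Type*} [Fintype V] [DecidableEq V] (G : SimpleGraph V) (k : ℕ)
    (K : Finset V) : Prop :=
  ∃ r : ℕ, r ≤ k ∧ K.card = k + r ∧
    (G.induce (↑K : Set V)).IsAcyclic ∧
    (K.filter fun v => ∃ u ∈ K, G.Adj v u).card = 2 * r ∧
    (∃ M : Finset (Sym2 V), M.card = r ∧
       (∀ e ∈ M, e ∈ G.edgeSet) ∧
       (∀ e ∈ M, ∀ v : V, v ∈ e → v ∈ K) ∧
       (∀ e ∈ M, ∀ f ∈ M, e ≠ f → ∀ v : V, v ∈ e → v ∉ f) ∧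
       (∀ v ∈ K, (∃ u ∈ K, G.Adj v u) → ∃ e ∈ M, v ∈ e)) ∧
    (∀ v : V, v ∉ K →
      ∃ u ∈ K, ∃ w ∈ K, u ≠ w ∧ G.Adj v u ∧ G.Adj v w ∧
        (((∀ x ∈ K, ¬ G.Adj u x) ∧ (∀ x ∈ K, ¬ G.Adj w x)) ∨ ReachWithin G K u w))

namespace ExtAux

open SimpleGraph Finset Walk
open scoped Classical

variable {V : Type*} [Fintype V] [DecidableEq V]

/-- The spanning subgraph of `G` consisting of the edges of `G` inside `K`. -/
@[reducible] def HG (G : SimpleGraph V) (K : Finset V) : SimpleGraph V where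
  Adj a b := a ∈ K ∧ b ∈ K ∧ G.Adj a b
  symm := ⟨fun _ _ (h : _ ∈ K ∧ _ ∈ K ∧ G.Adj _ _) => ⟨h.2.1, h.1, h.2.2.symm⟩⟩
  loopless := ⟨fun a (h : a ∈ K ∧ a ∈ K ∧ G.Adj a a) => G.loopless.irrefl a h.2.2⟩

lemma reachWithin_iff {G : SimpleGraph V} {K : Finset V} {u v : V} :
    ReachWithin G K u v ↔ (HG G K).Reachable u v :=
  (SimpleGraph.reachable_iff_reflTransGen (G := HG G K) u v).symm

/-- Independence predicate. -/
def Indep (G : SimpleGraph V) (s : Finset V) : Prop := ∀ u ∈ s, ∀ v ∈ s, ¬ G.Adj u v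

lemma indep_bddAbove (G : SimpleGraph V) :
    BddAbove {k | ∃ s : Finset V, s.card = k ∧ ∀ u ∈ s, ∀ v ∈ s, ¬ G.Adj u v} := by
  refine ⟨Fintype.card V, ?_⟩
  rintro n ⟨s, rfl, -⟩
  exact s.card_le_univ.trans_eq (by simp)

lemma indep_card_le (G : SimpleGraph V) {s : Finset V} (h : Indep G s) :
    s.card ≤ _root_.indepNum G :=
  le_csSup (indep_bddAbove G) ⟨s, rfl, h⟩

lemma exists_indep_card_eq (G : SimpleGraph V) :
    ∃ s : Finset V, s.card = _root_.indepNum G ∧ Indep G s := by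
  have := Nat.sSup_mem (s := {k | ∃ s : Finset V, s.card = k ∧ ∀ u ∈ s, ∀ v ∈ s, ¬ G.Adj u v})
    ⟨0, ∅, by simp, by simp⟩ (indep_bddAbove G)
  obtain ⟨s, hs, hi⟩ := this
  exact ⟨s, hs, hi⟩

section Coloring

lemma path_length_eq {W : Type*} {G : SimpleGraph W} (hac : G.IsAcyclic) {x v : W}
    {p : G.Walk x v} (hp : p.IsPath) : p.length = G.dist x v := by
  obtain ⟨q, hq, hql⟩ := (p.reachable).exists_path_of_dist
  have h : (⟨p, hp⟩ : G.Path x v) = ⟨q, hq⟩ := hac.path_unique _ _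
  rw [← hql]
  exact congrArg Walk.length (congrArg Subtype.val h)

lemma dist_adj {W : Type*} {G : SimpleGraph W} (hac : G.IsAcyclic) {x u v : W}
    (hr : G.Reachable x u) (huv : G.Adj u v) :
    G.dist x u = G.dist x v + 1 ∨ G.dist x v = G.dist x u + 1 := by
  classical
  obtain ⟨p, hp, hl⟩ := hr.exists_path_of_dist
  by_cases hv : v ∈ p.support
  · left
    have h1 : (p.takeUntil v hv).length = G.dist x v := path_length_eq hac (hp.takeUntil hv)
    have h2 : (p.dropUntil v hv).length = 1 := by
      have h := hac.path_unique ⟨p.dropUntil v hv, hp.dropUntil hv⟩ (Path.singleton huv.symm)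
      have := congrArg Walk.length (congrArg Subtype.val h)
      simpa [Path.singleton] using this
    have h3 := congrArg Walk.length (p.take_spec hv)
    rw [Walk.length_append] at h3
    omega
  · right
    have hp' : (p.concat huv).IsPath := by
      rw [Walk.isPath_def, Walk.support_concat]
      simp only [List.concat_eq_append, List.nodup_append]
      exact ⟨hp.support_nodup, by simp, by simpa using fun a (ha : a ∈ p.support) (h : a = v) => hv (h ▸ ha)⟩
    have h1 := path_length_eq hac hp'
    rw [Walk.length_concat, hl] at h1
    omega

end Coloring

section Lift

variable {G : SimpleGraph V} {K : Finset V}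

def liftWalk : ∀ {a b : V}, (p : (HG G K).Walk a b) → (ha : a ∈ (↑K : Set V)) →
    (hb : b ∈ (↑K : Set V)) → (G.induce (↑K : Set V)).Walk ⟨a, ha⟩ ⟨b, hb⟩
  | _, _, Walk.nil, _, _ => Walk.nil
  | _, _, Walk.cons h p, ha, hb => Walk.cons (by exact h.2.2) (liftWalk p h.2.1 hb)

lemma liftWalk_support_map : ∀ {a b : V} (p : (HG G K).Walk a b) (ha hb),
    ((liftWalk p ha hb).support.map Subtype.val) = p.support := by
  intro a b p
  induction p with
  | nil => intro ha hb; rfl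
  | cons h p ih => intro ha hb; simp only [liftWalk, Walk.support_cons, List.map_cons, ih]; exact congrArg (List.cons _) (ih _ hb)

lemma liftWalk_edges_map : ∀ {a b : V} (p : (HG G K).Walk a b) (ha hb),
    ((liftWalk p ha hb).edges.map (Sym2.map Subtype.val)) = p.edges := by
  intro a b p
  induction p with
  | nil => intro ha hb; rfl
  | cons h p ih =>
    intro ha hb
    simp only [liftWalk, Walk.edges_cons, List.map_cons, ih]
    exact congrArg (List.cons _) (ih _ hb)

lemma liftWalk_length : ∀ {a b : V} (p : (HG G K).Walk a b) (ha hb),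
    (liftWalk p ha hb).length = p.length := by
  intro a b p
  induction p with
  | nil => intro ha hb; rfl
  | cons h p ih => intro ha hb; simp only [liftWalk, Walk.length_cons, ih]; exact congrArg (· + 1) (ih _ hb)

lemma hg_acyclic_of_induce (h : (G.induce (↑K : Set V)).IsAcyclic) : (HG G K).IsAcyclic := by
  intro x c hc
  have hx : x ∈ (↑K : Set V) := by
    cases c with
    | nil => exact absurd hc Walk.IsCycle.not_of_nil
    | cons h' p => exact h'.1
  refine h (liftWalk c hx hx) ?_
  rw [Walk.isCycle_def, Walk.isTrail_def] at hc ⊢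
  obtain ⟨he, hn, hs⟩ := hc
  refine ⟨?_, ?_, ?_⟩
  · have := liftWalk_edges_map c hx hx
    exact List.Nodup.of_map _ (by rw [this]; exact he)
  · intro hnil
    apply hn
    have := liftWalk_length c hx hx
    rw [hnil] at this
    simp only [Walk.length_nil] at this
    cases c with
    | nil => rfl
    | cons h' p => simp at this
  · have hmap := liftWalk_support_map c hx hx
    have : ((liftWalk c hx hx).support.tail).map Subtype.val = c.support.tail := by
      rw [← hmap, List.map_tail]
    exact List.Nodup.of_map _ (by rw [this]; exact hs)

def homKH (G : SimpleGraph V) (K : Finset V) : (G.induce (↑K : Set V)) →g (HG G K) :=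
  ⟨Subtype.val, fun {a b} h => ⟨a.2, b.2, h⟩⟩

lemma induce_acyclic_of_hg (h : (HG G K).IsAcyclic) : (G.induce (↑K : Set V)).IsAcyclic := by
  intro x c hc
  exact h (c.map (homKH G K)) (hc.map Subtype.val_injective)

end Lift

section Grow

variable {G : SimpleGraph V}

lemma grow_acyclic {K : Finset V} {v : V} (hac : (HG G K).IsAcyclic) (hv : v ∉ K)
    (hnbr : ∀ a ∈ K, G.Adj v a → ∀ b ∈ K, G.Adj v b → a ≠ b → ¬ (HG G K).Reachable a b) :
    (HG G (insert v K)).IsAcyclic := by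
  have hmemK : ∀ {x y : V}, (HG G (insert v K)).Adj x y → x ≠ v → x ∈ K := by
    intro x y h hx
    rcases Finset.mem_insert.mp h.1 with h' | h'
    · exact absurd h' hx
    · exact h'
  have htrans : ∀ {x y : V} (t : (HG G (insert v K)).Walk x y), v ∉ t.support →
      ∀ e ∈ t.edges, e ∈ (HG G K).edgeSet := by
    intro x y t hvt e he
    induction e with
    | h a b =>
      have ha : a ∈ t.support := t.fst_mem_support_of_mem_edges he
      have hb : b ∈ t.support := t.snd_mem_support_of_mem_edges he
      have hadj : (HG G (insert v K)).Adj a b := t.adj_of_mem_edges he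
      have haK : a ∈ K := hmemK hadj (fun h => hvt (h ▸ ha))
      have hbK : b ∈ K := hmemK hadj.symm (fun h => hvt (h ▸ hb))
      exact (SimpleGraph.mem_edgeSet _).mpr ⟨haK, hbK, hadj.2.2⟩
  have key : ∀ (d : (HG G (insert v K)).Walk v v), ¬ d.IsCycle := by
    intro d hd
    cases d with
    | nil => exact hd.not_of_nil
    | cons hadj q =>
      rename_i a
      rw [Walk.cons_isCycle_iff] at hd
      obtain ⟨hq, he⟩ := hd
      have hqr : q.reverse.IsPath := hq.reverse
      cases hqr' : q.reverse with
      | nil => exact hadj.2.2.ne rfl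
      | cons hadj2 t =>
        rename_i b
        rw [hqr'] at hqr
        have hnd := hqr.support_nodup
        rw [Walk.support_cons] at hnd
        have hvt : v ∉ t.support := (List.nodup_cons.mp hnd).1
        have hab : a ≠ b := by
          intro h
          apply he
          have h2 : s(v, b) ∈ q.reverse.edges := by rw [hqr']; simp
          rw [Walk.edges_reverse, List.mem_reverse] at h2
          rw [← h] at h2
          exact h2
        have haK : a ∈ K := hmemK hadj.symm hadj.2.2.ne'
        have hbK : b ∈ K := hmemK hadj2.symm hadj2.2.2.ne'
        have hreach : (HG G K).Reachable a b :=
          (t.transfer (HG G K) (htrans t hvt)).reachable.symm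
        exact hnbr a haK hadj.2.2 b hbK hadj2.2.2 hab hreach
  intro x c hc
  by_cases hvs : v ∈ c.support
  · exact key (c.rotate v hvs) (hc.rotate hvs)
  · have hed : ∀ e ∈ c.edges, e ∈ (HG G K).edgeSet := htrans c hvs
    exact hac (c.transfer (HG G K) hed) (hc.transfer hed)

end Grow

section Extract

variable {G : SimpleGraph V}

/-- Extraction of an independent set from a forest-with-matching structure, avoiding a
prescribed set of pairwise-unreachable vertices. -/
lemma extract (K : Finset V) (r : ℕ) (M : Finset (Sym2 V))
    (hac : (HG G K).IsAcyclic)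
    (hT : (K.filter fun v => ∃ u ∈ K, G.Adj v u).card = 2 * r)
    (hMcard : M.card = r)
    (hMedge : ∀ e ∈ M, e ∈ G.edgeSet)
    (hMin : ∀ e ∈ M, ∀ v : V, v ∈ e → v ∈ K)
    (hMdisj : ∀ e ∈ M, ∀ f ∈ M, e ≠ f → ∀ v : V, v ∈ e → v ∉ f)
    (hMcover : ∀ v ∈ K, (∃ u ∈ K, G.Adj v u) → ∃ e ∈ M, v ∈ e)
    (F : Finset V)
    (hFK : ∀ u ∈ F, u ∈ K)
    (hFpair : ∀ u ∈ F, ∀ w ∈ F, u ≠ w → ¬ (HG G K).Reachable u w) :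
    ∃ S : Finset V, S ⊆ K ∧ S.card + r = K.card ∧ Indep G S ∧
      (∀ u ∈ F, (∃ x ∈ K, G.Adj u x) → u ∉ S) ∧
      (∀ u ∈ K, (∀ x ∈ K, ¬ G.Adj u x) → u ∈ S) := by
  set H := HG G K with hH
  set T := K.filter (fun v => ∃ u ∈ K, G.Adj v u) with hTdef
  have hTK : T ⊆ K := filter_subset _ _
  set rep : V → V := fun v => (H.connectedComponentMk v).out with hrep
  have reach_rep : ∀ v, H.Reachable (rep v) v := by
    intro v
    have h : H.connectedComponentMk (rep v) = H.connectedComponentMk v := Quot.out_eq _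
    exact ConnectedComponent.eq.mp h
  have rep_eq : ∀ u w, H.Reachable u w → rep u = rep w := by
    intro u w h
    simp only [hrep]
    rw [ConnectedComponent.eq.mpr h]
  set c : V → Bool := fun v => decide (H.dist (rep v) v % 2 = 1) with hc
  have proper : ∀ u w, H.Adj u w → c u ≠ c w := by
    intro u w h
    have hrepeq : rep u = rep w := rep_eq u w h.reachable
    have hd := dist_adj hac (reach_rep u) h
    simp only [hc, ne_eq, decide_eq_decide]
    rw [← hrepeq]
    rcases hd with h1 | h1 <;> omega
  set target : V → Bool := fun u => if (∃ w ∈ F, H.Reachable w u ∧ c w = true) then false else true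
    with htarget
  have target_reach : ∀ u w, H.Reachable u w → target u = target w := by
    intro u w h
    have hiff : (∃ x ∈ F, H.Reachable x u ∧ c x = true) ↔
        (∃ x ∈ F, H.Reachable x w ∧ c x = true) :=
      ⟨fun ⟨x, hx, hr2, hc2⟩ => ⟨x, hx, hr2.trans h, hc2⟩,
       fun ⟨x, hx, hr2, hc2⟩ => ⟨x, hx, hr2.trans h.symm, hc2⟩⟩
    simp only [htarget]
    rw [if_congr hiff rfl rfl]
  have target_F : ∀ u ∈ F, c u ≠ target u := by
    intro u hu
    by_cases hcu : c u = true
    · have : target u = false := by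
        simp only [htarget]
        rw [if_pos (⟨u, hu, Reachable.refl u, hcu⟩ : ∃ w ∈ F, H.Reachable w u ∧ c w = true)]
      rw [this, hcu]; simp
    · have hcu' : c u = false := by simpa using hcu
      have hnex : ¬ ∃ x ∈ F, H.Reachable x u ∧ c x = true := by
        rintro ⟨x, hx, hr2, hc2⟩
        have hne : x ≠ u := by intro h; rw [h, hcu'] at hc2; simp at hc2
        exact hFpair x hx u hu hne hr2
      have : target u = true := by
        simp only [htarget]
        rw [if_neg hnex]
      rw [this, hcu']; simp
  set pick := T.filter (fun x => c x = target x) with hpick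
  have hpickT : pick ⊆ T := filter_subset _ _
  have cardone : ∀ e ∈ M, (pick.filter (· ∈ e)).card = 1 := by
    intro e he
    induction e with
    | h a b =>
      have haK : a ∈ K := hMin _ he a (by simp)
      have hbK : b ∈ K := hMin _ he b (by simp)
      have hadj : G.Adj a b := (SimpleGraph.mem_edgeSet _).mp (hMedge _ he)
      have haT : a ∈ T := by rw [hTdef]; exact mem_filter.mpr ⟨haK, b, hbK, hadj⟩
      have hbT : b ∈ T := by rw [hTdef]; exact mem_filter.mpr ⟨hbK, a, haK, hadj.symm⟩
      have hHadj : H.Adj a b := ⟨haK, hbK, hadj⟩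
      have htab : target a = target b := target_reach a b hHadj.reachable
      have hcab : c a ≠ c b := proper a b hHadj
      rw [Finset.card_eq_one]
      by_cases hca : c a = target a
      · refine ⟨a, ?_⟩
        ext x
        simp only [mem_filter, Finset.mem_singleton, hpick, Sym2.mem_iff]
        constructor
        · rintro ⟨⟨hxT, hcx⟩, hx | hx⟩
          · exact hx
          · subst hx
            rw [← htab] at hcx
            exact absurd (hca.trans hcx.symm) hcab
        · rintro rfl
          exact ⟨⟨haT, hca⟩, Or.inl rfl⟩
      · have hcb : c b = target b := by
          rw [← htab]
          rcases Bool.eq_false_or_eq_true (c b) with h1 | h1 <;>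
          rcases Bool.eq_false_or_eq_true (c a) with h2 | h2 <;>
          rcases Bool.eq_false_or_eq_true (target a) with h3 | h3 <;>
            first
            | exact absurd (h2.trans h3.symm) hca
            | exact absurd (h2.trans h1.symm) hcab
            | exact h1.trans h3.symm
        refine ⟨b, ?_⟩
        ext x
        simp only [mem_filter, Finset.mem_singleton, hpick, Sym2.mem_iff]
        constructor
        · rintro ⟨⟨hxT, hcx⟩, hx | hx⟩
          · subst hx
            exact absurd hcx hca
          · exact hx
        · rintro rfl
          exact ⟨⟨hbT, hcb⟩, Or.inr rfl⟩
  have hpickcard : pick.card = r := by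
    have hrepr : pick = M.biUnion (fun e => pick.filter (· ∈ e)) := by
      ext x
      simp only [mem_biUnion, mem_filter]
      constructor
      · intro hx
        have hxT : x ∈ T := hpickT hx
        rw [hTdef, mem_filter] at hxT
        obtain ⟨e, he, hxe⟩ := hMcover x hxT.1 hxT.2
        exact ⟨e, he, hx, hxe⟩
      · rintro ⟨e, he, hx, _⟩
        exact hx
    rw [hrepr, Finset.card_biUnion]
    · rw [Finset.sum_congr rfl cardone]
      simp [hMcard]
    · intro e he f hf hef
      rw [Function.onFun, Finset.disjoint_left]
      intro x hx hx'
      exact hMdisj e he f hf hef x (mem_filter.mp hx).2 (mem_filter.mp hx').2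
  refine ⟨(K \ T) ∪ pick, ?_, ?_, ?_, ?_, ?_⟩
  · intro x hx
    rcases Finset.mem_union.mp hx with h | h
    · exact (Finset.mem_sdiff.mp h).1
    · exact hTK (hpickT h)
  · have hdisj : Disjoint (K \ T) pick := by
      rw [Finset.disjoint_left]
      intro x hx hx'
      exact (Finset.mem_sdiff.mp hx).2 (hpickT hx')
    rw [Finset.card_union_of_disjoint hdisj, Finset.card_sdiff_of_subset hTK, hT, hpickcard]
    have h2r : 2 * r ≤ K.card := hT ▸ Finset.card_le_card hTK
    omega
  · intro u hu w hw hadj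
    have huK : u ∈ K := by
      rcases Finset.mem_union.mp hu with h | h
      · exact (Finset.mem_sdiff.mp h).1
      · exact hTK (hpickT h)
    have hwK : w ∈ K := by
      rcases Finset.mem_union.mp hw with h | h
      · exact (Finset.mem_sdiff.mp h).1
      · exact hTK (hpickT h)
    have huT : u ∈ T := by rw [hTdef]; exact mem_filter.mpr ⟨huK, w, hwK, hadj⟩
    have hwT : w ∈ T := by rw [hTdef]; exact mem_filter.mpr ⟨hwK, u, huK, hadj.symm⟩
    have hu' : u ∈ pick := by
      rcases Finset.mem_union.mp hu with h | h
      · exact absurd huT (Finset.mem_sdiff.mp h).2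
      · exact h
    have hw' : w ∈ pick := by
      rcases Finset.mem_union.mp hw with h | h
      · exact absurd hwT (Finset.mem_sdiff.mp h).2
      · exact h
    have hHadj : H.Adj u w := ⟨huK, hwK, hadj⟩
    have h1 := (mem_filter.mp hu').2
    have h2 := (mem_filter.mp hw').2
    have h3 := target_reach u w hHadj.reachable
    exact proper u w hHadj (by rw [h1, h2, h3])
  · intro u hu hnb hmem
    have huT : u ∈ T := by rw [hTdef]; exact mem_filter.mpr ⟨hFK u hu, hnb⟩
    rcases Finset.mem_union.mp hmem with h | h
    · exact (Finset.mem_sdiff.mp h).2 huT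
    · exact target_F u hu (mem_filter.mp h).2
  · intro u huK hiso
    apply Finset.mem_union.mpr
    left
    rw [Finset.mem_sdiff]
    refine ⟨huK, ?_⟩
    rw [hTdef, mem_filter]
    rintro ⟨-, x, hx, hadx⟩
    exact hiso x hx hadx

end Extract

/-- Pre-extended independent set: all conditions of an extended independent set of order
`_root_.indepNum G` except the outside condition. -/
def Pre (G : SimpleGraph V) (K : Finset V) : Prop :=
  ∃ r : ℕ, K.card = _root_.indepNum G + r ∧ (HG G K).IsAcyclic ∧
    (K.filter fun v => ∃ u ∈ K, G.Adj v u).card = 2 * r ∧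
    (∃ M : Finset (Sym2 V), M.card = r ∧
       (∀ e ∈ M, e ∈ G.edgeSet) ∧
       (∀ e ∈ M, ∀ v : V, v ∈ e → v ∈ K) ∧
       (∀ e ∈ M, ∀ f ∈ M, e ≠ f → ∀ v : V, v ∈ e → v ∉ f) ∧
       (∀ v ∈ K, (∃ u ∈ K, G.Adj v u) → ∃ e ∈ M, v ∈ e))

theorem le_of_ext (G : SimpleGraph V) {k : ℕ} {K : Finset V} (h : IsExtIndepSet G k K) :
    k ≤ _root_.indepNum G := by
  obtain ⟨r, hrk, hcard, hacI, hT, ⟨M, hMcard, hMedge, hMin, hMdisj, hMcover⟩, -⟩ := h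
  have hac : (HG G K).IsAcyclic := hg_acyclic_of_induce hacI
  obtain ⟨S, hSK, hScard, hSind, -, -⟩ := extract K r M hac hT hMcard hMedge hMin hMdisj
    hMcover ∅ (by simp) (by simp)
  have := indep_card_le G hSind
  omega

theorem exists_ext (G : SimpleGraph V) : ∃ K : Finset V, IsExtIndepSet G (_root_.indepNum G) K := by
  obtain ⟨I, hIcard, hIindep⟩ := exists_indep_card_eq G
  have hPreI : Pre G I := by
    refine ⟨0, by simpa using hIcard, ?_, ?_, ∅, by simp, by simp, by simp, by simp, ?_⟩
    · intro x c hc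
      cases c with
      | nil => exact hc.not_of_nil
      | cons h p => exact hIindep _ h.1 _ h.2.1 h.2.2
    · rw [Finset.card_eq_zero, Finset.filter_eq_empty_iff]
      rintro v hv ⟨u, hu, hadj⟩
      exact hIindep v hv u hu hadj
    · rintro v hv ⟨u, hu, hadj⟩
      exact absurd hadj (hIindep v hv u hu)
  set C := Finset.univ.powerset.filter (fun K : Finset V => Pre G K) with hC
  have hIC : I ∈ C := mem_filter.mpr ⟨mem_powerset.mpr (subset_univ I), hPreI⟩
  obtain ⟨K, hKC, hKmax⟩ := C.exists_max_image Finset.card ⟨I, hIC⟩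
  obtain ⟨r, hcard, hac, hT, M, hMcard, hMedge, hMin, hMdisj, hMcover⟩ :=
    (mem_filter.mp hKC).2
  have h2r : 2 * r ≤ K.card := hT ▸ Finset.card_le_card (filter_subset _ _)
  refine ⟨K, r, by omega, hcard, induce_acyclic_of_hg hac, hT,
    ⟨M, hMcard, hMedge, hMin, hMdisj, hMcover⟩, ?_⟩
  intro v hv
  by_contra hnot
  have hpair : ∀ u ∈ K, ∀ w ∈ K, G.Adj v u → G.Adj v w → u ≠ w →
      ¬ ((∀ x ∈ K, ¬ G.Adj u x) ∧ (∀ x ∈ K, ¬ G.Adj w x)) ∧ ¬ ReachWithin G K u w := by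
    intro u hu w hw h1 h2 h3
    constructor
    · intro hiso; exact hnot ⟨u, hu, w, hw, h3, h1, h2, Or.inl hiso⟩
    · intro hrw; exact hnot ⟨u, hu, w, hw, h3, h1, h2, Or.inr hrw⟩
  by_cases caseA : ∃ u0 ∈ K, G.Adj v u0 ∧ ∀ x ∈ K, ¬ G.Adj u0 x
  · -- Case B : grow K by v matched to the isolated neighbor u0
    obtain ⟨u0, hu0K, hadj0, hiso0⟩ := caseA
    have hvu0 : v ≠ u0 := fun h => hv (h ▸ hu0K)
    have huniq : ∀ w ∈ K, G.Adj v w → (∀ x ∈ K, ¬ G.Adj w x) → w = u0 := by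
      intro w hw hadj hiso
      by_contra hne
      exact (hpair u0 hu0K w hw hadj0 hadj (Ne.symm hne)).1 ⟨hiso0, hiso⟩
    have hnbr : ∀ a ∈ K, G.Adj v a → ∀ b ∈ K, G.Adj v b → a ≠ b →
        ¬ (HG G K).Reachable a b := by
      intro a ha h1 b hb h2 h3 hr
      exact (hpair a ha b hb h1 h2 h3).2 (reachWithin_iff.mpr hr)
    have hisoM : ∀ f ∈ M, u0 ∉ f := by
      intro f hf hu0f
      have hfe := hMedge f hf
      induction f with
      | h a b =>
        have haK : a ∈ K := hMin _ hf a (by simp)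
        have hbK : b ∈ K := hMin _ hf b (by simp)
        have hadj : G.Adj a b := (SimpleGraph.mem_edgeSet _).mp hfe
        rcases Sym2.mem_iff.mp hu0f with rfl | rfl
        · exact hiso0 b hbK hadj
        · exact hiso0 a haK hadj.symm
    have hnewM : s(v, u0) ∉ M := fun h => hv (hMin _ h v (by simp))
    have hPre' : Pre G (insert v K) := by
      refine ⟨r + 1, ?_, ?_, ?_, insert s(v, u0) M, ?_, ?_, ?_, ?_, ?_⟩
      · rw [Finset.card_insert_of_notMem hv, hcard]; omega
      · exact grow_acyclic hac hv hnbr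
      · -- new non-isolated set is insert v (insert u0 T)
        have hTset : (insert v K).filter (fun w => ∃ u ∈ insert v K, G.Adj w u)
            = insert v (insert u0 (K.filter fun w => ∃ u ∈ K, G.Adj w u)) := by
          ext x
          constructor
          · intro hx'
            obtain ⟨hx, u, hu, hadj⟩ := mem_filter.mp hx'
            refine Finset.mem_insert.mpr ?_
            rcases Finset.mem_insert.mp hx with rfl | hxK
            · exact Or.inl rfl
            · refine Or.inr (Finset.mem_insert.mpr ?_)
              rcases Finset.mem_insert.mp hu with h | huK
              · by_cases hisox : ∀ y ∈ K, ¬ G.Adj x y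
                · exact Or.inl (huniq x hxK (h ▸ hadj).symm hisox)
                · push_neg at hisox
                  obtain ⟨y, hy, hxy⟩ := hisox
                  exact Or.inr (mem_filter.mpr ⟨hxK, y, hy, hxy⟩)
              · exact Or.inr (mem_filter.mpr ⟨hxK, u, huK, hadj⟩)
          · intro hx'
            rcases Finset.mem_insert.mp hx' with rfl | hx2
            · exact mem_filter.mpr ⟨Finset.mem_insert_self _ _, u0,
                Finset.mem_insert_of_mem hu0K, hadj0⟩
            · rcases Finset.mem_insert.mp hx2 with rfl | hxT
              · exact mem_filter.mpr ⟨Finset.mem_insert_of_mem hu0K, v,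
                  Finset.mem_insert_self _ _, hadj0.symm⟩
              · obtain ⟨hxK, u, hu, hadj⟩ := mem_filter.mp hxT
                exact mem_filter.mpr ⟨Finset.mem_insert_of_mem hxK, u,
                  Finset.mem_insert_of_mem hu, hadj⟩
        rw [hTset]
        have hu0T : u0 ∉ K.filter (fun w => ∃ u ∈ K, G.Adj w u) := by
          rw [mem_filter]
          rintro ⟨-, x, hx, hadx⟩
          exact hiso0 x hx hadx
        have hvT : v ∉ insert u0 (K.filter fun w => ∃ u ∈ K, G.Adj w u) := by
          rw [Finset.mem_insert]
          rintro (rfl | h)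
          · exact hvu0 rfl
          · exact hv (mem_of_mem_filter v h)
        rw [Finset.card_insert_of_notMem hvT, Finset.card_insert_of_notMem hu0T, hT]
        ring
      · rw [Finset.card_insert_of_notMem hnewM, hMcard]
      · intro e he
        rcases Finset.mem_insert.mp he with rfl | he
        · exact (SimpleGraph.mem_edgeSet _).mpr hadj0
        · exact hMedge e he
      · intro e he x hx
        rcases Finset.mem_insert.mp he with rfl | he
        · rcases Sym2.mem_iff.mp hx with rfl | rfl
          · exact Finset.mem_insert_self _ _
          · exact Finset.mem_insert_of_mem hu0K
        · exact Finset.mem_insert_of_mem (hMin e he x hx)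
      · intro e he f hf hef x hxe hxf
        rcases Finset.mem_insert.mp he with rfl | heM
        · rcases Finset.mem_insert.mp hf with rfl | hfM
          · exact hef rfl
          · rcases Sym2.mem_iff.mp hxe with h | h
            · exact hv (h ▸ hMin f hfM x hxf)
            · exact hisoM f hfM (h ▸ hxf)
        · rcases Finset.mem_insert.mp hf with rfl | hfM
          · rcases Sym2.mem_iff.mp hxf with h | h
            · exact hv (h ▸ hMin e heM x hxe)
            · exact hisoM e heM (h ▸ hxe)
          · exact hMdisj e heM f hfM hef x hxe hxf
      · intro w hw hnb
        rcases Finset.mem_insert.mp hw with h | hwK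
        · exact ⟨s(v, u0), Finset.mem_insert_self _ _, by rw [h]; simp⟩
        · obtain ⟨u, hu, hadj⟩ := hnb
          rcases Finset.mem_insert.mp hu with h | huK
          · rw [h] at hadj
            by_cases hisow : ∀ y ∈ K, ¬ G.Adj w y
            · have hwu0 : w = u0 := huniq w hwK hadj.symm hisow
              exact ⟨s(v, u0), Finset.mem_insert_self _ _, by rw [hwu0]; simp⟩
            · push_neg at hisow
              obtain ⟨y, hy, hwy⟩ := hisow
              obtain ⟨e, he, hwe⟩ := hMcover w hwK ⟨y, hy, hwy⟩
              exact ⟨e, Finset.mem_insert_of_mem he, hwe⟩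
          · obtain ⟨e, he, hwe⟩ := hMcover w hwK ⟨u, huK, hadj⟩
            exact ⟨e, Finset.mem_insert_of_mem he, hwe⟩
    have hK'C : insert v K ∈ C := mem_filter.mpr ⟨mem_powerset.mpr (subset_univ _), hPre'⟩
    have hle := hKmax _ hK'C
    rw [Finset.card_insert_of_notMem hv] at hle
    omega
  · -- Case A : every neighbor of v in K is matched; extract avoiding them
    have hFpair : ∀ u ∈ K.filter (fun u => G.Adj v u), ∀ w ∈ K.filter (fun u => G.Adj v u),
        u ≠ w → ¬ (HG G K).Reachable u w := by
      intro u hu w hw hne hr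
      rw [mem_filter] at hu hw
      exact (hpair u hu.1 w hw.1 hu.2 hw.2 hne).2 (reachWithin_iff.mpr hr)
    obtain ⟨S, hSK, hScard, hSind, hSavoid, -⟩ := extract K r M hac hT hMcard hMedge hMin
      hMdisj hMcover (K.filter (fun u => G.Adj v u)) (fun u hu => (mem_filter.mp hu).1) hFpair
    have hvS : v ∉ S := fun h => hv (hSK h)
    have hins : Indep G (insert v S) := by
      intro a ha b hb hadj
      have hnbS : ∀ x ∈ S, ¬ G.Adj v x := by
        intro x hxS hadjx
        have hxK : x ∈ K := hSK hxS
        have hxnb : ∃ y ∈ K, G.Adj x y := by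
          by_contra hno
          push_neg at hno
          exact caseA ⟨x, hxK, hadjx, hno⟩
        exact hSavoid x (mem_filter.mpr ⟨hxK, hadjx⟩) hxnb hxS
      rcases Finset.mem_insert.mp ha with rfl | haS <;>
        rcases Finset.mem_insert.mp hb with rfl | hbS
      · exact G.loopless.irrefl _ hadj
      · exact hnbS b hbS hadj
      · exact hnbS a haS hadj.symm
      · exact hSind a haS b hbS hadj
    have hcard2 : (insert v S).card = S.card + 1 := Finset.card_insert_of_notMem hvS
    have hle := indep_card_le G hins
    omega

end ExtAux

/-- For any finite graph `G` and positive integer `k`, `α(G) = k` if and only if `G` has an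
extended independent set of order `k` but no extended independent set of larger order. -/
theorem stmt4 {V : Type*} [Fintype V] [DecidableEq V] (G : SimpleGraph V) (k : ℕ)
    (hk : 0 < k) :
    indepNum G = k ↔
      ((∃ K : Finset V, IsExtIndepSet G k K) ∧
        ∀ k' : ℕ, k < k' → ∀ K : Finset V, ¬ IsExtIndepSet G k' K) := by
  constructor
  · rintro rfl
    refine ⟨ExtAux.exists_ext G, fun k' hk' K hK => ?_⟩
    exact absurd (ExtAux.le_of_ext G hK) (by omega)
  · rintro ⟨⟨K, hK⟩, hno⟩
    have h1 : k ≤ indepNum G := ExtAux.le_of_ext G hK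
    rcases eq_or_lt_of_le h1 with h | h
    · exact h.symm
    · obtain ⟨K', hK'⟩ := ExtAux.exists_ext G
      exact absurd hK' (hno _ h K')
end

section
/- For every c > 2 there exists a unique positive λ_c with E[χ(λ_c)] = c, and as c → ∞ the following asymptotics hold: λ_c = c − c^2 e^{−c} ± e^{−2c + O(log c)} and η̄_c = c ± e^{−c + O(log c)}; that is, there exist constants C > 0 and c₀ > 2 such that for all c ≥ c₀, |λ_c − (c − c^2 e^{−c})| ≤ e^{−2c + C log c} and |η̄_c − c| ≤ e^{−c + C log c}. -/
open Real

/-- The mean of the truncated Poisson random variable `χ(λ)` with lower bound `2`: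
`E[χ(λ)] = λ(e^λ − 1)/(e^λ − λ − 1)`. -/
noncomputable def truncPoissonMean (lam : ℝ) : ℝ :=
  lam * (Real.exp lam - 1) / (Real.exp lam - lam - 1)

/-- `η̄` associated to a parameter `λ`: `λ e^λ / (e^λ − 1)`. -/
noncomputable def etaBar (lam : ℝ) : ℝ :=
  lam * Real.exp lam / (Real.exp lam - 1)

lemma D_pos {l : ℝ} (hl : 0 < l) : 0 < exp l - l - 1 := by
  have := Real.add_one_lt_exp (ne_of_gt hl); linarith

lemma quad_le_exp {x : ℝ} (hx : 0 ≤ x) : 1 + x + x^2/2 ≤ exp x := by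
  have h := Real.sum_le_exp_of_nonneg hx 3
  simp [Finset.sum_range_succ, Nat.factorial] at h
  linarith

lemma quart_le_exp {x : ℝ} (hx : 0 ≤ x) : x^4/24 ≤ exp x := by
  have h := Real.sum_le_exp_of_nonneg hx 5
  simp [Finset.sum_range_succ, Nat.factorial] at h
  nlinarith [sq_nonneg x, pow_nonneg hx 3]

lemma mean_eq {l : ℝ} (hl : 0 < l) :
    truncPoissonMean l = l + l^2 / (exp l - l - 1) := by
  have hD := D_pos hl
  rw [truncPoissonMean]
  field_simp
  ring

lemma lt_mean {l : ℝ} (hl : 0 < l) : l < truncPoissonMean l := by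
  rw [mean_eq hl]
  have := div_pos (pow_pos hl 2) (D_pos hl)
  linarith

lemma mean_le {l : ℝ} (hl : 0 < l) : truncPoissonMean l ≤ 2 * exp l := by
  have hD := D_pos hl
  have hq := quad_le_exp hl.le
  have hm : 1 - l ≤ exp (-l) := by have := Real.add_one_le_exp (-l); linarith
  have he : exp l * exp (-l) = 1 := by rw [← Real.exp_add]; simp
  have hep : 0 < exp l := Real.exp_pos l
  rw [truncPoissonMean, div_le_iff₀ hD]
  nlinarith [mul_pos hl hep, mul_nonneg hl.le (Real.exp_pos (-l)).le]

lemma deriv_num_pos {l : ℝ} (hl : 0 < l) :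
    0 < exp l ^ 2 - (2 + l^2) * exp l + 1 := by
  have hs : l/2 < Real.sinh (l/2) := Real.self_lt_sinh_iff.2 (by linarith)
  rw [Real.sinh_eq] at hs
  set u := exp (l/2) with hu
  set v := exp (-(l/2)) with hv
  have h3 : 0 < u := Real.exp_pos _
  have h4 : 0 < v := Real.exp_pos _
  have e1 : exp l = u^2 := by
    rw [hu, sq, ← Real.exp_add]; norm_num
  have e2 : u * v = 1 := by rw [hu, hv, ← Real.exp_add]; simp
  have h5 : l^2 < (u - v)^2 := by nlinarith
  have h6 : (0:ℝ) < u^2 + v^2 - 2 - l^2 := by nlinarith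
  rw [e1]
  nlinarith [mul_pos (pow_pos h3 2) h6, e2, sq_nonneg (u*v)]

lemma hasDerivAt_mean {l : ℝ} (hl : 0 < l) :
    HasDerivAt truncPoissonMean
      ((exp l ^ 2 - (2 + l^2) * exp l + 1) / (exp l - l - 1)^2) l := by
  have hD := D_pos hl
  have h1 : HasDerivAt (fun x : ℝ => x * (exp x - 1)) (1 * (exp l - 1) + l * exp l) l :=
    (hasDerivAt_id l).mul ((Real.hasDerivAt_exp l).sub_const 1)
  have h2 : HasDerivAt (fun x : ℝ => exp x - x - 1) (exp l - 1) l := by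
    simpa using ((Real.hasDerivAt_exp l).sub (hasDerivAt_id l)).sub_const 1
  have h := h1.div h2 (ne_of_gt hD)
  convert h using 1
  · rfl
  · rfl
  · rfl
  ring

lemma mean_strictMonoOn : StrictMonoOn truncPoissonMean (Set.Ioi 0) := by
  apply strictMonoOn_of_deriv_pos (convex_Ioi 0)
  · exact fun x hx => (hasDerivAt_mean hx).continuousAt.continuousWithinAt
  · intro x hx
    rw [interior_Ioi] at hx
    rw [(hasDerivAt_mean hx).deriv]
    exact div_pos (deriv_num_pos hx) (pow_pos (D_pos hx) 2)

lemma exists_mean {c : ℝ} (hc : 2 < c) : ∃ l, 0 < l ∧ truncPoissonMean l = c := by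
  set a := Real.log (c/2) / 2 with ha
  have hc2 : 1 < c/2 := by linarith
  have hlog : 0 < Real.log (c/2) := Real.log_pos hc2
  have hapos : 0 < a := by positivity
  have hac : a ≤ c := by
    have h1 : Real.log (c/2) ≤ c/2 - 1 := Real.log_le_sub_one_of_pos (by linarith)
    rw [ha]; linarith
  have hfa : truncPoissonMean a ≤ c := by
    have h1 := mean_le hapos
    have h2 : exp a < c/2 := by
      have : a < Real.log (c/2) := by rw [ha]; linarith
      calc exp a < exp (Real.log (c/2)) := Real.exp_lt_exp.2 this
        _ = c/2 := Real.exp_log (by linarith)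
    linarith
  have hfc : c ≤ truncPoissonMean c := (lt_mean (by linarith)).le
  have hcont : ContinuousOn truncPoissonMean (Set.Icc a c) := by
    intro x hx
    have hx0 : 0 < x := lt_of_lt_of_le hapos hx.1
    exact (hasDerivAt_mean hx0).continuousAt.continuousWithinAt
  obtain ⟨l, hli, hfl⟩ := intermediate_value_Icc hac hcont ⟨hfa, hfc⟩
  exact ⟨l, lt_of_lt_of_le hapos hli.1, hfl⟩

set_option maxHeartbeats 1000000 in
lemma key_est {c l : ℝ} (hc : exp 30 ≤ c) (hl : 0 < l)
    (hm : truncPoissonMean l = c) :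
    |l - (c - c^2 * exp (-c))| ≤ c^5 * exp (-c)^2 ∧
    |etaBar l - c| ≤ c^5 * exp (-c) := by
  set y := exp (-c) with hy_def
  set el := exp l with hel_def
  set eml := exp (-l) with heml_def
  have hy : 0 < y := Real.exp_pos _
  have hel : 0 < el := Real.exp_pos _
  have heml : 0 < eml := Real.exp_pos _
  have hYy : exp c * y = 1 := by rw [hy_def, ← Real.exp_add]; simp
  have hele : el * eml = 1 := by rw [hel_def, heml_def, ← Real.exp_add]; simp
  set D := el - l - 1 with hD_def
  clear_value D
  clear_value y el eml
  have hD : 0 < D := by rw [hD_def, hel_def]; exact D_pos hl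
  -- c is large
  have hc256 : (256:ℝ) ≤ c := by
    have h1 : (16:ℝ) ≤ exp 15 := by linarith [Real.add_one_le_exp (15:ℝ)]
    have h2 : exp 15 * exp 15 = exp 30 := by rw [← Real.exp_add]; norm_num
    have h3 := mul_le_mul h1 h1 (by norm_num) (by linarith)
    linarith
  have hc0 : (0:ℝ) < c := by linarith
  -- identity
  have hid : c = l + l^2 / D := by rw [← hm, mean_eq hl, hD_def, hel_def]
  have hlc : l < c := by rw [← hm]; exact lt_mean hl
  -- l ≥ 29
  have hl29 : (29:ℝ) ≤ l := by
    have h1 : c ≤ 2 * el := by rw [← hm, hel_def]; exact mean_le hl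
    have h2 : exp 29 * exp 1 = exp 30 := by rw [← Real.exp_add]; norm_num
    have h3 : (2:ℝ) ≤ exp 1 := by linarith [Real.add_one_le_exp (1:ℝ)]
    have h3' := mul_le_mul_of_nonneg_left h3 (Real.exp_pos (29:ℝ)).le
    have h4 : exp 29 ≤ el := by linarith
    rw [hel_def] at h4
    linarith [Real.exp_le_exp.1 h4]
  have hq : 1 + l + l^2/2 ≤ el := by rw [hel_def]; exact quad_le_exp hl.le
  have hD2 : el ≤ 2 * D := by
    rw [hD_def]; linarith [sq_nonneg (l-2)]
  have hgap : c - l = l^2 / D := by linarith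
  have hgappos : 0 < c - l := by
    rw [hgap]; exact div_pos (pow_pos hl 2) hD
  have hl2c2 : l^2 ≤ c^2 := by linarith [mul_le_mul hlc.le hlc.le hl.le hc0.le]
  -- c - l ≤ 1
  have hgap1 : c - l ≤ 1 := by
    rw [hgap, div_le_one hD]
    have h5 : l^4/24 ≤ el := by rw [hel_def]; exact quart_le_exp hl.le
    have p1 : (841:ℝ) ≤ l^2 := by linarith [mul_le_mul hl29 hl29 (by norm_num) hl.le]
    have p2 : 841*l^2 ≤ l^2*l^2 := mul_le_mul_of_nonneg_right p1 (sq_nonneg l)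
    have p3 : l*1 ≤ l*l := mul_le_mul_of_nonneg_left (by linarith) hl.le
    rw [hD_def]
    linarith [h5, p2, p3]
  have hlc1 : c - 1 ≤ l := by linarith
  -- exp c ≤ 3 exp l
  have hexp1 : exp 1 ≤ 3 := by linarith [Real.exp_one_lt_d9]
  have hecl : exp c ≤ 3 * el := by
    have h1 : exp c = exp (c - l) * el := by rw [hel_def, ← Real.exp_add]; ring_nf
    have h2 : exp (c-l) ≤ 3 := le_trans (Real.exp_le_exp.2 hgap1) hexp1
    have h3 := mul_le_mul_of_nonneg_right h2 hel.le
    linarith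
  have hemly : eml ≤ 3 * y := by
    have h1 := mul_le_mul_of_nonneg_left hecl (mul_nonneg heml.le hy.le)
    have e1 : eml*(exp c*y) = eml := by rw [hYy, mul_one]
    have e2 : y*(el*eml) = y := by rw [hele, mul_one]
    linarith [h1, e1, e2]
  have hyeml : y ≤ eml := by
    rw [hy_def, heml_def]
    exact Real.exp_le_exp.2 (neg_le_neg hlc.le)
  -- upper bound on gap
  have hgapub : c - l ≤ 6 * c^2 * y := by
    rw [hgap, div_le_iff₀ hD]
    have h1 : exp c ≤ 6 * D := by linarith
    have h2 : (1:ℝ) ≤ 6 * y * D := by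
      have h2a := mul_le_mul_of_nonneg_left h1 hy.le
      have h2b : y * exp c = 1 := by rw [mul_comm]; exact hYy
      linarith
    calc l^2 ≤ c^2 * 1 := by linarith
      _ ≤ c^2 * (6*y*D) := mul_le_mul_of_nonneg_left h2 (sq_nonneg c)
      _ = 6*c^2*y*D := by ring
  -- decomposition : c - l = l² eml + R
  have q1 : c - l = l^2 * eml + l^2*(l+1)*eml/D := by
    rw [hgap]
    have hq1 : l^2/D - l^2*(l+1)*eml/D = l^2*eml := by
      rw [div_sub_div_same, div_eq_iff (ne_of_gt hD)]
      linear_combination (-(l^2*eml))*hD_def + (-(l^2))*hele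
    linarith [hq1]
  -- bound on R
  have hRpos : 0 ≤ l^2*(l+1)*eml/D := by positivity
  have hR : l^2*(l+1)*eml/D ≤ 36 * c^3 * y^2 := by
    rw [div_le_iff₀ hD]
    have h1 : eml ≤ 2*eml*eml*D := by
      have ha := mul_le_mul_of_nonneg_left hD2 (mul_pos heml heml).le
      have hb : eml*eml*el = eml := by linear_combination eml*hele
      linarith [ha, hb]
    have h2 : l^2*(l+1) ≤ 2*c^3 := by
      have := mul_le_mul hl2c2 (by linarith : l+1 ≤ 2*c) (by linarith) (sq_nonneg c)
      linarith [this]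
    have h3 : eml*eml ≤ 9*y^2 := by
      have := mul_le_mul hemly hemly heml.le (by positivity)
      linarith [this]
    calc l^2*(l+1)*eml ≤ l^2*(l+1)*(2*eml*eml*D) :=
          mul_le_mul_of_nonneg_left h1 (by positivity)
      _ = (l^2*(l+1))*(eml*eml)*(2*D) := by ring
      _ ≤ (2*c^3)*(9*y^2)*(2*D) := by
          apply mul_le_mul_of_nonneg_right _ (by linarith : (0:ℝ) ≤ 2*D)
          exact mul_le_mul h2 h3 (by positivity) (by positivity)
      _ = 36*c^3*y^2*D := by ring
  -- first difference bound
  have hs1 : c^2*y - l^2*eml ≤ 12*c^3*y^2 := by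
    have h0 := mul_le_mul_of_nonneg_left (by linarith : c + l ≤ 2*c) hgappos.le
    have h1b : c^2 - l^2 ≤ 12*c^3*y := by
      have := mul_le_mul_of_nonneg_left hgapub (by linarith : (0:ℝ) ≤ 2*c)
      linarith [h0, this]
    have h2 := mul_le_mul_of_nonneg_right h1b hy.le
    have h3 := mul_le_mul_of_nonneg_left hyeml (sq_nonneg l)
    linarith [h2, h3]
  -- second difference bound
  have hs2 : l^2*eml - c^2*y ≤ 18*c^4*y^2 := by
    have hb : exp (c-l) * exp (-(c-l)) = 1 := by rw [← Real.exp_add]; simp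
    have hx2 : exp (c-l) - 1 ≤ (c-l)*exp (c-l) := by
      have ha := Real.add_one_le_exp (-(c-l))
      have hd := mul_le_mul_of_nonneg_right ha (Real.exp_pos (c-l)).le
      linarith [hd, hb]
    have hx3 : exp (c-l) ≤ 3 := le_trans (Real.exp_le_exp.2 hgap1) hexp1
    have hx4 : eml = y * exp (c-l) := by
      rw [heml_def, hy_def, ← Real.exp_add]; ring_nf
    have h6 : exp (c-l) - 1 ≤ 18*c^2*y := by
      have := mul_le_mul_of_nonneg_left hx3 hgappos.le
      linarith [hx2, this, hgapub]
    have hx5 : eml - y ≤ 18*c^2*y^2 := by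
      have := mul_le_mul_of_nonneg_left h6 hy.le
      linarith [this, hx4]
    have h7 : l^2*(eml - y) ≤ c^2*(18*c^2*y^2) :=
      mul_le_mul hl2c2 hx5 (by linarith) (sq_nonneg c)
    have h8 : 0 ≤ (c^2 - l^2)*y := mul_nonneg (by linarith) hy.le
    linarith [h7, h8]
  -- auxiliary positivity facts
  have hcsq : (256:ℝ) ≤ c^2 := by linarith [mul_le_mul hc256 hc256 (by norm_num) hc0.le]
  have hb1 : 0 ≤ (c^5 - 12*c^3)*y^2 := by
    have : (c^5 - 12*c^3)*y^2 = (c^3*(c^2-12))*y^2 := by ring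
    rw [this]
    exact mul_nonneg (mul_nonneg (by positivity) (by linarith)) (sq_nonneg y)
  have hb2 : 0 ≤ (c^5 - 54*c^4)*y^2 := by
    have : (c^5 - 54*c^4)*y^2 = (c^4*(c-54))*y^2 := by ring
    rw [this]
    exact mul_nonneg (mul_nonneg (by positivity) (by linarith)) (sq_nonneg y)
  have hb3 : 0 ≤ (c^4 - c^3)*y^2 := by
    have : (c^4 - c^3)*y^2 = (c^3*(c-1))*y^2 := by ring
    rw [this]
    exact mul_nonneg (mul_nonneg (by positivity) (by linarith)) (sq_nonneg y)
  have hmain : |l - (c - c^2 * y)| ≤ c^5 * y^2 := by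
    rw [abs_le]
    constructor
    · linarith [hs2, hR, q1, hb2, hb3]
    · linarith [hs1, q1, hRpos, hb1]
  refine ⟨hmain, ?_⟩
  -- etaBar bound
  have hel1 : (1:ℝ) < el := by linarith
  have q2 : etaBar l = l + l/(el - 1) := by
    have hne : el - (1:ℝ) ≠ 0 := ne_of_gt (by linarith)
    rw [etaBar, ← hel_def]
    field_simp
    ring
  have h8 : l/(el-1) ≤ 6*c*y := by
    rw [div_le_iff₀ (by linarith : (0:ℝ) < el - 1)]
    have h9' : (1:ℝ) ≤ 2*eml*(el-1) := by
      have := mul_nonneg (by linarith : (0:ℝ) ≤ el - 2) heml.le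
      linarith [this, hele]
    calc l = l*1 := (mul_one l).symm
      _ ≤ l*(2*eml*(el-1)) := mul_le_mul_of_nonneg_left h9' hl.le
      _ = 2*(l*eml)*(el-1) := by ring
      _ ≤ 2*(c*(3*y))*(el-1) := by
          apply mul_le_mul_of_nonneg_right _ (by linarith : (0:ℝ) ≤ el - 1)
          have := mul_le_mul hlc.le hemly heml.le (by linarith : (0:ℝ) ≤ c)
          linarith
      _ = 6*c*y*(el-1) := by ring
  have h9 : 0 < l/(el-1) := div_pos hl (by linarith)
  have hb4 : 0 ≤ (c^5 - 6*c)*y := by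
    have : (c^5 - 6*c)*y = (c*(c^4-6))*y := by ring
    rw [this]
    refine mul_nonneg (mul_nonneg hc0.le ?_) hy.le
    linarith [mul_le_mul hcsq hcsq (by norm_num) (sq_nonneg c)]
  have hb5 : 0 ≤ (c^5 - 6*c^2)*y := by
    have : (c^5 - 6*c^2)*y = (c^2*(c^3-6))*y := by ring
    rw [this]
    refine mul_nonneg (mul_nonneg (sq_nonneg c) ?_) hy.le
    linarith [mul_le_mul hc256 hcsq (by norm_num) hc0.le]
  rw [q2, abs_le]
  constructor
  · linarith [h9, hgapub, hb5]
  · linarith [h8, hb4, hgappos]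

/-- For every `c > 2` there is a unique positive `λ_c` with `E[χ(λ_c)] = c`, and as
`c → ∞`, `λ_c = c − c²e^{−c} ± e^{−2c + O(log c)}` and `η̄_c = c ± e^{−c + O(log c)}`. -/
theorem stmt17 :
    (∀ c : ℝ, 2 < c → ∃! lam : ℝ, 0 < lam ∧ truncPoissonMean lam = c) ∧
    ∃ C : ℝ, 0 < C ∧ ∃ c₀ : ℝ, 2 < c₀ ∧
      ∀ c : ℝ, c₀ ≤ c → ∀ lam : ℝ, 0 < lam → truncPoissonMean lam = c →
        |lam - (c - c ^ 2 * Real.exp (-c))| ≤ Real.exp (-2 * c + C * Real.log c) ∧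
        |etaBar lam - c| ≤ Real.exp (-c + C * Real.log c) := by
  constructor
  · intro c hc
    obtain ⟨l, hl, hml⟩ := exists_mean hc
    refine ⟨l, ⟨hl, hml⟩, ?_⟩
    rintro l' ⟨hl', hml'⟩
    exact mean_strictMonoOn.injOn hl' hl (by rw [hml, hml'])
  · refine ⟨5, by norm_num, exp 30, ?_, ?_⟩
    · have := Real.add_one_le_exp (30:ℝ); linarith
    · intro c hc l hl hml
      have hcpos : 0 < c := lt_of_lt_of_le (Real.exp_pos 30) hc
      obtain ⟨hmain, heta⟩ := key_est hc hl hml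
      have h1 : exp (5 * Real.log c) = c^5 := by
        rw [show (5:ℝ) * Real.log c = Real.log (c^5) by rw [Real.log_pow]; push_cast; ring]
        exact Real.exp_log (by positivity)
      constructor
      · have h2 : exp (-2*c + 5*Real.log c) = c^5 * exp (-c)^2 := by
          rw [Real.exp_add, h1, show exp (-2*c) = exp (-c)^2 by rw [sq, ← Real.exp_add]; ring_nf]
          ring
        rw [h2]
        exact hmain
      · have h2 : exp (-c + 5*Real.log c) = c^5 * exp (-c) := by
          rw [Real.exp_add, h1]; ring
        rw [h2]
        exact heta
end
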